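/- arXiv:hep-th/0303062 — 2 statements merged into one kernel-verified Lean document; each statement's English description precedes it below -/
import Mathlib

section
/- Analytic continuation of one-particle wave functions of wedge-localized test functions: let m > 0 and g ∈ 𝒮(ℝ²) be a Schwartz function with supp g ⊆ W_L := {x ∈ ℝ² : x₁ < −|x₀|}, and set g^±(θ) := (1/2π)∫_{ℝ²} g(±x)·exp(i·m(cosh(θ)x₀ − sinh(θ)x₁)) d²x for θ ∈ ℝ. Then there exists a function F : ℂ → ℂ which is continuous on the closed strip {ζ : 0 ≤ Im ζ ≤ π}, holomorphic on the open strip {ζ : 0 < Im ζ < π}, satisfies F(θ) = g⁺(θ) and F(θ + iπ) = g⁻(θ) for all θ ∈ ℝ, and satisfies F(ζ) → 0 as |Re ζ| → ∞, uniformly for Im ζ in compact subsets of (0, π). -/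
open MeasureTheory Complex Filter Topology

noncomputable section

/-- The rapidity wave function h^±(θ) = (1/2π)∫ h(±x)·e^{ip(θ)·x} d²x,
with p(θ)·x = m(cosh θ·x₀ − sinh θ·x₁); here `waveFn m h` gives h⁺ when applied to h
and h⁻ when applied to x ↦ h(−x). -/
def waveFn (m : ℝ) (h : ℝ × ℝ → ℂ) (θ : ℝ) : ℂ :=
  (1 / (2 * Real.pi)) *
    ∫ x : ℝ × ℝ, h x *
      Complex.exp (Complex.I * ((m * (Real.cosh θ * x.1 - Real.sinh θ * x.2) : ℝ) : ℂ))



/-- complex exponent -/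
def Eexp (m : ℝ) (ζ : ℂ) (x : ℝ × ℝ) : ℂ :=
  Complex.I * (m * (Complex.cosh ζ * x.1 - Complex.sinh ζ * x.2))

lemma cosh_re' (ζ : ℂ) : (Complex.cosh ζ).re = Real.cosh ζ.re * Real.cos ζ.im := by
  conv_lhs => rw [← Complex.re_add_im ζ]
  rw [Complex.cosh_add, Complex.cosh_mul_I, Complex.sinh_mul_I]
  simp [Complex.cosh_ofReal_re, Complex.sinh_ofReal_re, Complex.cosh_ofReal_im,
    Complex.sinh_ofReal_im, Complex.cos_ofReal_re, Complex.sin_ofReal_re,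
    Complex.cos_ofReal_im, Complex.sin_ofReal_im, Complex.mul_re, Complex.mul_im]

lemma cosh_im' (ζ : ℂ) : (Complex.cosh ζ).im = Real.sinh ζ.re * Real.sin ζ.im := by
  conv_lhs => rw [← Complex.re_add_im ζ]
  rw [Complex.cosh_add, Complex.cosh_mul_I, Complex.sinh_mul_I]
  simp [Complex.cosh_ofReal_re, Complex.sinh_ofReal_re, Complex.cosh_ofReal_im,
    Complex.sinh_ofReal_im, Complex.cos_ofReal_re, Complex.sin_ofReal_re,
    Complex.cos_ofReal_im, Complex.sin_ofReal_im, Complex.mul_re, Complex.mul_im]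

lemma sinh_re' (ζ : ℂ) : (Complex.sinh ζ).re = Real.sinh ζ.re * Real.cos ζ.im := by
  conv_lhs => rw [← Complex.re_add_im ζ]
  rw [Complex.sinh_add, Complex.cosh_mul_I, Complex.sinh_mul_I]
  simp [Complex.cosh_ofReal_re, Complex.sinh_ofReal_re, Complex.cosh_ofReal_im,
    Complex.sinh_ofReal_im, Complex.cos_ofReal_re, Complex.sin_ofReal_re,
    Complex.cos_ofReal_im, Complex.sin_ofReal_im, Complex.mul_re, Complex.mul_im]

lemma sinh_im' (ζ : ℂ) : (Complex.sinh ζ).im = Real.cosh ζ.re * Real.sin ζ.im := by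
  conv_lhs => rw [← Complex.re_add_im ζ]
  rw [Complex.sinh_add, Complex.cosh_mul_I, Complex.sinh_mul_I]
  simp [Complex.cosh_ofReal_re, Complex.sinh_ofReal_re, Complex.cosh_ofReal_im,
    Complex.sinh_ofReal_im, Complex.cos_ofReal_re, Complex.sin_ofReal_re,
    Complex.cos_ofReal_im, Complex.sin_ofReal_im, Complex.mul_re, Complex.mul_im]

lemma Eexp_re (m : ℝ) (ζ : ℂ) (x : ℝ × ℝ) :
    (Eexp m ζ x).re
      = -(m * Real.sin ζ.im * (Real.sinh ζ.re * x.1 - Real.cosh ζ.re * x.2)) := by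
  simp only [Eexp, Complex.mul_re, Complex.mul_im, Complex.I_re, Complex.I_im,
    Complex.sub_re, Complex.sub_im, Complex.ofReal_re, Complex.ofReal_im,
    cosh_re', cosh_im', sinh_re', sinh_im']
  ring

lemma abs_sinh_le_cosh (θ : ℝ) : |Real.sinh θ| ≤ Real.cosh θ := by
  rw [Real.abs_sinh, ← Real.cosh_abs]
  exact (Real.sinh_lt_cosh _).le

lemma wedge_ineq (θ : ℝ) {x : ℝ × ℝ} (hx : x.2 < -|x.1|) :
    Real.cosh θ * (-x.2 - |x.1|) ≤ Real.sinh θ * x.1 - Real.cosh θ * x.2 := by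
  have h1 : -(|Real.sinh θ| * |x.1|) ≤ Real.sinh θ * x.1 := by
    rw [← abs_mul]; exact neg_abs_le _
  nlinarith [abs_sinh_le_cosh θ, abs_nonneg x.1, Real.cosh_pos θ]

lemma norm_cexp_Eexp_le {m s : ℝ} (hm : 0 < m) (hs : 0 ≤ s) {ζ : ℂ}
    (hsin : s ≤ Real.sin ζ.im) {x : ℝ × ℝ} (hx : x.2 < -|x.1|) :
    ‖Complex.exp (Eexp m ζ x)‖ ≤ Real.exp (-(m * s * (-x.2 - |x.1|) * Real.cosh ζ.re)) := by
  rw [Complex.norm_exp, Eexp_re]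
  apply Real.exp_le_exp.2
  have hw := wedge_ineq ζ.re hx
  have hd : 0 < -x.2 - |x.1| := by have := abs_nonneg x.1; linarith
  have hc := Real.cosh_pos ζ.re
  have h1 : m * s * ((-x.2 - |x.1|) * Real.cosh ζ.re)
      ≤ m * Real.sin ζ.im * (Real.sinh ζ.re * x.1 - Real.cosh ζ.re * x.2) := by
    have h2 : (0:ℝ) ≤ (-x.2 - |x.1|) * Real.cosh ζ.re := by positivity
    have h3 : (-x.2 - |x.1|) * Real.cosh ζ.re
        ≤ Real.sinh ζ.re * x.1 - Real.cosh ζ.re * x.2 := by nlinarith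
    calc m * s * ((-x.2 - |x.1|) * Real.cosh ζ.re)
        ≤ m * s * (Real.sinh ζ.re * x.1 - Real.cosh ζ.re * x.2) :=
          mul_le_mul_of_nonneg_left h3 (by positivity)
      _ ≤ m * Real.sin ζ.im * (Real.sinh ζ.re * x.1 - Real.cosh ζ.re * x.2) :=
          mul_le_mul_of_nonneg_right (by nlinarith) (h2.trans h3)
  linarith [h1]

lemma cont_cexp_Eexp (m : ℝ) (ζ : ℂ) :
    Continuous (fun x : ℝ × ℝ => Complex.exp (Eexp m ζ x)) := by
  unfold Eexp; fun_prop

lemma cont_cexp_Eexp' (m : ℝ) (x : ℝ × ℝ) :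
    Continuous (fun ζ : ℂ => Complex.exp (Eexp m ζ x)) := by
  unfold Eexp; fun_prop

lemma stripBound (m : ℝ) (hm : 0 < m) (g : SchwartzMap (ℝ × ℝ) ℂ)
    (hsupp : Function.support (⇑g) ⊆ {x : ℝ × ℝ | x.2 < -|x.1|}) {ζ : ℂ}
    (h0 : 0 ≤ ζ.im) (h1 : ζ.im ≤ Real.pi) (x : ℝ × ℝ) :
    ‖g x * Complex.exp (Eexp m ζ x)‖ ≤ ‖g x‖ := by
  by_cases hgx : g x = 0
  · simp [hgx]
  · have hx : x.2 < -|x.1| := hsupp (Function.mem_support.2 hgx)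
    rw [norm_mul]
    have := norm_cexp_Eexp_le hm le_rfl (Real.sin_nonneg_of_nonneg_of_le_pi h0 h1) hx
    simp only [mul_zero, zero_mul, neg_zero, Real.exp_zero] at this
    calc ‖g x‖ * ‖Complex.exp (Eexp m ζ x)‖ ≤ ‖g x‖ * 1 :=
          mul_le_mul_of_nonneg_left (by simpa using this) (norm_nonneg _)
      _ = ‖g x‖ := mul_one _

lemma integrable_f (m : ℝ) (hm : 0 < m) (g : SchwartzMap (ℝ × ℝ) ℂ)
    (hsupp : Function.support (⇑g) ⊆ {x : ℝ × ℝ | x.2 < -|x.1|}) {ζ : ℂ}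
    (h0 : 0 ≤ ζ.im) (h1 : ζ.im ≤ Real.pi) :
    Integrable (fun x => g x * Complex.exp (Eexp m ζ x)) volume :=
  (g.integrable.norm).mono'
    ((g.continuous.mul (cont_cexp_Eexp m ζ)).aestronglyMeasurable)
    (Filter.Eventually.of_forall (stripBound m hm g hsupp h0 h1))

lemma norm_cosh_le (z : ℂ) : ‖Complex.cosh z‖ ≤ Real.exp ‖z‖ := by
  rw [show Complex.cosh z = (Complex.exp z + Complex.exp (-z)) / 2 from rfl]
  calc ‖(Complex.exp z + Complex.exp (-z)) / 2‖
      ≤ (‖Complex.exp z‖ + ‖Complex.exp (-z)‖) / 2 := by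
        rw [norm_div, show ‖(2:ℂ)‖ = 2 by norm_num]
        gcongr
        exact norm_add_le _ _
    _ ≤ (Real.exp ‖z‖ + Real.exp ‖z‖) / 2 := by
        gcongr <;> rw [Complex.norm_exp] <;>
          apply Real.exp_le_exp.2
        · exact (Complex.abs_re_le_norm z).trans' (le_abs_self _) |>.trans le_rfl
        · simpa using (neg_le_abs z.re).trans (Complex.abs_re_le_norm z)
    _ = Real.exp ‖z‖ := by ring

lemma norm_sinh_le (z : ℂ) : ‖Complex.sinh z‖ ≤ Real.exp ‖z‖ := by
  rw [show Complex.sinh z = (Complex.exp z - Complex.exp (-z)) / 2 from rfl]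
  calc ‖(Complex.exp z - Complex.exp (-z)) / 2‖
      ≤ (‖Complex.exp z‖ + ‖Complex.exp (-z)‖) / 2 := by
        rw [norm_div, show ‖(2:ℂ)‖ = 2 by norm_num]
        gcongr
        exact norm_sub_le _ _
    _ ≤ (Real.exp ‖z‖ + Real.exp ‖z‖) / 2 := by
        gcongr <;> rw [Complex.norm_exp] <;>
          apply Real.exp_le_exp.2
        · exact (Complex.abs_re_le_norm z).trans' (le_abs_self _) |>.trans le_rfl
        · simpa using (neg_le_abs z.re).trans (Complex.abs_re_le_norm z)
    _ = Real.exp ‖z‖ := by ring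

lemma hasDerivAt_f (m : ℝ) (g : SchwartzMap (ℝ × ℝ) ℂ) (x : ℝ × ℝ) (ζ : ℂ) :
    HasDerivAt (fun z => g x * Complex.exp (Eexp m z x))
      (g x * (Complex.exp (Eexp m ζ x) *
        (Complex.I * (m * (Complex.sinh ζ * x.1 - Complex.cosh ζ * x.2))))) ζ := by
  have h1 : HasDerivAt (fun z => Eexp m z x)
      (Complex.I * (m * (Complex.sinh ζ * x.1 - Complex.cosh ζ * x.2))) ζ := by
    unfold Eexp
    exact ((((Complex.hasDerivAt_cosh ζ).mul_const (x.1:ℂ)).sub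
      ((Complex.hasDerivAt_sinh ζ).mul_const (x.2:ℂ))).const_mul (m:ℂ)).const_mul Complex.I
  exact (h1.cexp).const_mul (g x)

def delta0 (x : ℝ × ℝ) : ℝ := max 0 (-x.2 - |x.1|)

lemma delta0_nonneg (x : ℝ × ℝ) : 0 ≤ delta0 x := le_max_left _ _

lemma cont_delta0 : Continuous delta0 := by unfold delta0; fun_prop

lemma tendsto_cosh_atTop : Filter.Tendsto Real.cosh Filter.atTop Filter.atTop := by
  apply Filter.tendsto_atTop_mono (f := fun x => (x + 1) / 2)
  · intro x
    rw [Real.cosh_eq]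
    have h1 := Real.add_one_le_exp x
    have h2 := (Real.exp_pos (-x)).le
    linarith
  · exact (Filter.tendsto_atTop_add_const_right _ 1 Filter.tendsto_id).atTop_div_const
      (by norm_num)

lemma tendsto_decay (c : ℝ) (hc : 0 < c) (g : SchwartzMap (ℝ × ℝ) ℂ)
    (hsupp : Function.support (⇑g) ⊆ {x : ℝ × ℝ | x.2 < -|x.1|}) :
    Filter.Tendsto (fun t : ℝ => ∫ x : ℝ × ℝ, ‖g x‖ * Real.exp (-(c * delta0 x * t)))
      Filter.atTop (𝓝 0) := by
  have h0 : (0:ℝ) = ∫ _ : ℝ × ℝ, (0:ℝ) := by simp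
  rw [h0]
  apply tendsto_integral_filter_of_dominated_convergence (fun x => ‖g x‖)
  · exact Filter.Eventually.of_forall fun t =>
      (g.continuous.norm.mul (Real.continuous_exp.comp
        (((continuous_const.mul cont_delta0).mul continuous_const).neg))).aestronglyMeasurable
  · filter_upwards [Filter.eventually_ge_atTop (0:ℝ)] with t ht
    apply Filter.Eventually.of_forall; intro x
    rw [Real.norm_of_nonneg (by positivity)]
    have hδ := delta0_nonneg x
    have hexp : Real.exp (-(c * delta0 x * t)) ≤ 1 := by
      rw [show (1:ℝ) = Real.exp 0 by simp]
      apply Real.exp_le_exp.2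
      have h3 : 0 ≤ c * delta0 x * t := by positivity
      linarith
    nlinarith [norm_nonneg (g x)]
  · exact g.integrable.norm
  · apply Filter.Eventually.of_forall; intro x
    by_cases hgx : g x = 0
    · simp [hgx]
    · have hx : x.2 < -|x.1| := hsupp (Function.mem_support.2 hgx)
      have hδ : 0 < delta0 x := by
        have := abs_nonneg x.1
        unfold delta0; rw [max_eq_right (by linarith)]; linarith
      have hlin : Filter.Tendsto (fun t : ℝ => -(c * delta0 x * t)) Filter.atTop
          Filter.atBot := by
        have : (fun t : ℝ => -(c * delta0 x * t)) = fun t : ℝ => (-(c * delta0 x)) * t := by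
          funext t; ring
        simp only [this]
        exact Filter.Tendsto.const_mul_atTop_of_neg (by nlinarith) Filter.tendsto_id
      have := (Real.tendsto_exp_atBot.comp hlin).const_mul ‖g x‖
      simpa using this

lemma min_sin_le {a b lam : ℝ} (ha : 0 < a) (hb : b < Real.pi)
    (h1 : a ≤ lam) (h2 : lam ≤ b) :
    min (Real.sin a) (Real.sin b) ≤ Real.sin lam := by
  have hpi := Real.pi_pos
  rcases le_total lam (Real.pi / 2) with h | h
  · refine (min_le_left _ _).trans ?_
    exact Real.strictMonoOn_sin.monotoneOn ⟨by linarith, by linarith⟩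
      ⟨by linarith, h⟩ h1
  · refine (min_le_right _ _).trans ?_
    rw [← Real.sin_pi_sub b, ← Real.sin_pi_sub lam]
    exact Real.strictMonoOn_sin.monotoneOn ⟨by linarith, by linarith⟩
      ⟨by linarith, by linarith⟩ (by linarith)

lemma bdry0 (m : ℝ) (g : SchwartzMap (ℝ × ℝ) ℂ) (θ : ℝ) :
    (1 / (2 * (Real.pi : ℂ))) * (∫ x : ℝ × ℝ, g x * Complex.exp (Eexp m (θ : ℂ) x))
      = waveFn m (⇑g) θ := by
  unfold waveFn
  have hint : (∫ x : ℝ × ℝ, g x * Complex.exp (Eexp m (θ : ℂ) x))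
      = ∫ x : ℝ × ℝ, g x * Complex.exp (Complex.I *
        ((m * (Real.cosh θ * x.1 - Real.sinh θ * x.2) : ℝ) : ℂ)) := by
    apply integral_congr_ae
    apply Filter.Eventually.of_forall
    intro x
    have : Eexp m (θ : ℂ) x = Complex.I *
        ((m * (Real.cosh θ * x.1 - Real.sinh θ * x.2) : ℝ) : ℂ) := by
      unfold Eexp; push_cast; ring
    simp only [this]
  rw [hint]
lemma bdrypi (m : ℝ) (g : SchwartzMap (ℝ × ℝ) ℂ) (θ : ℝ) :
    (1 / (2 * (Real.pi : ℂ))) *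
      (∫ x : ℝ × ℝ, g x * Complex.exp (Eexp m ((θ : ℂ) + Real.pi * Complex.I) x))
      = waveFn m (fun x => g (-x)) θ := by
  have hc : Complex.cosh ((θ : ℂ) + Real.pi * Complex.I) = -Complex.cosh θ := by
    rw [Complex.cosh_add, Complex.cosh_mul_I, Complex.sinh_mul_I,
      ← Complex.ofReal_cos, ← Complex.ofReal_sin, Real.cos_pi, Real.sin_pi]
    push_cast; ring
  have hs : Complex.sinh ((θ : ℂ) + Real.pi * Complex.I) = -Complex.sinh θ := by
    rw [Complex.sinh_add, Complex.cosh_mul_I, Complex.sinh_mul_I,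
      ← Complex.ofReal_cos, ← Complex.ofReal_sin, Real.cos_pi, Real.sin_pi]
    push_cast; ring
  unfold waveFn
  rw [← MeasureTheory.integral_neg_eq_self
    (fun x : ℝ × ℝ => g (-x) * Complex.exp (Complex.I *
      ((m * (Real.cosh θ * x.1 - Real.sinh θ * x.2) : ℝ) : ℂ))) volume]
  have hint : (∫ x : ℝ × ℝ, g x * Complex.exp (Eexp m ((θ : ℂ) + Real.pi * Complex.I) x))
      = ∫ x : ℝ × ℝ, g (- -x) * Complex.exp (Complex.I *
        ((m * (Real.cosh θ * (-x).1 - Real.sinh θ * (-x).2) : ℝ) : ℂ)) := by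
    apply integral_congr_ae
    apply Filter.Eventually.of_forall
    intro x
    have h1 : Eexp m ((θ : ℂ) + Real.pi * Complex.I) x = Complex.I *
        ((m * (Real.cosh θ * (-x).1 - Real.sinh θ * (-x).2) : ℝ) : ℂ) := by
      unfold Eexp
      rw [hc, hs]
      simp only [Prod.fst_neg, Prod.snd_neg]
      push_cast; ring
    simp only [h1, neg_neg]
  rw [hint]
lemma contOnF (m : ℝ) (hm : 0 < m) (g : SchwartzMap (ℝ × ℝ) ℂ)
    (hsupp : Function.support (⇑g) ⊆ {x : ℝ × ℝ | x.2 < -|x.1|}) :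
    ContinuousOn (fun ζ => (1 / (2 * (Real.pi : ℂ))) *
      ∫ x : ℝ × ℝ, g x * Complex.exp (Eexp m ζ x)) {ζ : ℂ | 0 ≤ ζ.im ∧ ζ.im ≤ Real.pi} := by
  apply continuousOn_const.mul
  intro ζ₀ hζ₀
  apply continuousWithinAt_of_dominated (bound := fun x => ‖g x‖)
  · exact Filter.Eventually.of_forall fun ζ =>
      (g.continuous.mul (cont_cexp_Eexp m ζ)).aestronglyMeasurable
  · filter_upwards [self_mem_nhdsWithin] with ζ hζ
    exact Filter.Eventually.of_forall (stripBound m hm g hsupp hζ.1 hζ.2)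
  · exact g.integrable.norm
  · exact Filter.Eventually.of_forall fun x =>
      (continuous_const.mul (cont_cexp_Eexp' m x)).continuousWithinAt

lemma decayF (m : ℝ) (hm : 0 < m) (g : SchwartzMap (ℝ × ℝ) ℂ)
    (hsupp : Function.support (⇑g) ⊆ {x : ℝ × ℝ | x.2 < -|x.1|})
    (a b : ℝ) (ha : 0 < a) (hab : a ≤ b) (hb : b < Real.pi)
    (ε : ℝ) (hε : 0 < ε) :
    ∃ R : ℝ, ∀ ζ : ℂ, a ≤ ζ.im → ζ.im ≤ b → R ≤ |ζ.re| →
      ‖(1 / (2 * (Real.pi : ℂ))) *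
        ∫ x : ℝ × ℝ, g x * Complex.exp (Eexp m ζ x)‖ < ε := by
  set s := min (Real.sin a) (Real.sin b) with hsdef
  have hs0 : 0 < s := lt_min (Real.sin_pos_of_pos_of_lt_pi ha (lt_of_le_of_lt hab hb))
    (Real.sin_pos_of_pos_of_lt_pi (lt_of_lt_of_le ha hab) hb)
  have hdec := (tendsto_decay (m * s) (by positivity) g hsupp).comp tendsto_cosh_atTop
  have hev : ∀ᶠ r in Filter.atTop,
      (∫ x : ℝ × ℝ, ‖g x‖ * Real.exp (-(m * s * delta0 x * Real.cosh r))) < ε := by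
    have := hdec.eventually_lt_const hε
    simpa [Function.comp] using this
  obtain ⟨R, hR⟩ := Filter.eventually_atTop.1 hev
  refine ⟨R, fun ζ h1 h2 h3 => ?_⟩
  have hbnd : ∀ x : ℝ × ℝ, ‖g x * Complex.exp (Eexp m ζ x)‖
      ≤ ‖g x‖ * Real.exp (-(m * s * delta0 x * Real.cosh ζ.re)) := by
    intro x
    by_cases hgx : g x = 0
    · simp only [hgx, zero_mul, norm_zero, norm_zero]
      positivity
    · have hx : x.2 < -|x.1| := hsupp (Function.mem_support.2 hgx)
      have hδ : delta0 x = -x.2 - |x.1| := by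
        unfold delta0
        rw [max_eq_right]
        have := abs_nonneg x.1; linarith
      rw [norm_mul, hδ]
      apply mul_le_mul_of_nonneg_left _ (norm_nonneg _)
      exact norm_cexp_Eexp_le hm hs0.le (min_sin_le ha hb h1 h2) hx
  have hintR : Integrable (fun x : ℝ × ℝ =>
      ‖g x‖ * Real.exp (-(m * s * delta0 x * Real.cosh ζ.re))) volume := by
    apply (g.integrable.norm).mono'
    · exact (g.continuous.norm.mul (Real.continuous_exp.comp
        ((((continuous_const.mul cont_delta0).mul continuous_const)).neg))).aestronglyMeasurable
    · apply Filter.Eventually.of_forall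
      intro x
      rw [Real.norm_of_nonneg (by positivity)]
      have hexp : Real.exp (-(m * s * delta0 x * Real.cosh ζ.re)) ≤ 1 := by
        rw [show (1:ℝ) = Real.exp 0 by simp]
        apply Real.exp_le_exp.2
        have h4 : 0 ≤ m * s * delta0 x * Real.cosh ζ.re := by
          have := delta0_nonneg x
          have := (Real.cosh_pos ζ.re).le
          positivity
        linarith
      nlinarith [norm_nonneg (g x)]
  rw [norm_mul]
  have hcoef : ‖(1 / (2 * (Real.pi : ℂ)))‖ ≤ 1 := by
    rw [show (1 / (2 * (Real.pi : ℂ))) = ((1 / (2 * Real.pi) : ℝ) : ℂ) by push_cast; ring,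
      Complex.norm_real, Real.norm_eq_abs, abs_of_pos (by positivity)]
    rw [div_le_one (by positivity)]
    linarith [Real.pi_gt_three]
  have hintle : ‖∫ x : ℝ × ℝ, g x * Complex.exp (Eexp m ζ x)‖
      ≤ ∫ x : ℝ × ℝ, ‖g x‖ * Real.exp (-(m * s * delta0 x * Real.cosh ζ.re)) := by
    calc ‖∫ x : ℝ × ℝ, g x * Complex.exp (Eexp m ζ x)‖
        ≤ ∫ x : ℝ × ℝ, ‖g x * Complex.exp (Eexp m ζ x)‖ :=
          norm_integral_le_integral_norm _
      _ ≤ ∫ x : ℝ × ℝ, ‖g x‖ * Real.exp (-(m * s * delta0 x * Real.cosh ζ.re)) := by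
          apply integral_mono_of_nonneg
          · exact Filter.Eventually.of_forall fun x => norm_nonneg _
          · exact hintR
          · exact Filter.Eventually.of_forall hbnd
  have hfin : (∫ x : ℝ × ℝ, ‖g x‖ * Real.exp (-(m * s * delta0 x * Real.cosh ζ.re))) < ε := by
    have h6 := hR |ζ.re| h3
    rwa [Real.cosh_abs] at h6
  calc ‖(1 / (2 * (Real.pi : ℂ)))‖ * ‖∫ x : ℝ × ℝ, g x * Complex.exp (Eexp m ζ x)‖
      ≤ 1 * (∫ x : ℝ × ℝ, ‖g x‖ * Real.exp (-(m * s * delta0 x * Real.cosh ζ.re))) :=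
        mul_le_mul hcoef hintle (norm_nonneg _) zero_le_one
    _ < ε := by rw [one_mul]; exact hfin
lemma diffOnF (m : ℝ) (hm : 0 < m) (g : SchwartzMap (ℝ × ℝ) ℂ)
    (hsupp : Function.support (⇑g) ⊆ {x : ℝ × ℝ | x.2 < -|x.1|}) :
    DifferentiableOn ℂ (fun ζ => (1 / (2 * (Real.pi : ℂ))) *
      ∫ x : ℝ × ℝ, g x * Complex.exp (Eexp m ζ x)) {ζ : ℂ | 0 < ζ.im ∧ ζ.im < Real.pi} := by
  intro ζ₀ hζ₀
  have hopen : IsOpen {ζ : ℂ | 0 < ζ.im ∧ ζ.im < Real.pi} := by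
    have he : {ζ : ℂ | 0 < ζ.im ∧ ζ.im < Real.pi} =
        Complex.im ⁻¹' (Set.Ioo 0 Real.pi) := rfl
    rw [he]; exact isOpen_Ioo.preimage Complex.continuous_im
  obtain ⟨ε, hε, hball⟩ := Metric.isOpen_iff.1 hopen ζ₀ hζ₀
  set C := Real.exp (‖ζ₀‖ + ε) with hC
  have hC0 : 0 < C := Real.exp_pos _
  have key := hasDerivAt_integral_of_dominated_loc_of_deriv_le (μ := volume)
    (F := fun ζ (x : ℝ × ℝ) => g x * Complex.exp (Eexp m ζ x))
    (F' := fun ζ (x : ℝ × ℝ) => g x * (Complex.exp (Eexp m ζ x) *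
      (Complex.I * (m * (Complex.sinh ζ * x.1 - Complex.cosh ζ * x.2)))))
    (x₀ := ζ₀) (bound := fun x => 2 * m * C * ‖x‖ * ‖g x‖) (Metric.ball_mem_nhds ζ₀ hε)
    (Filter.Eventually.of_forall fun ζ =>
      (g.continuous.mul (cont_cexp_Eexp m ζ)).aestronglyMeasurable)
    (integrable_f m hm g hsupp (hball (Metric.mem_ball_self hε)).1.le
      (hball (Metric.mem_ball_self hε)).2.le)
    ((g.continuous.mul ((cont_cexp_Eexp m ζ₀).mul
      (continuous_const.mul (continuous_const.mul
        ((continuous_const.mul (by fun_prop)).sub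
          (continuous_const.mul (by fun_prop))))))).aestronglyMeasurable)
    ?_ ?_ ?_
  · exact (key.2.const_mul ((1 : ℂ) / (2 * (Real.pi : ℂ)))).differentiableAt.differentiableWithinAt
  · apply Filter.Eventually.of_forall
    intro x ζ hζ
    have hζS : 0 ≤ ζ.im ∧ ζ.im ≤ Real.pi :=
      ⟨(hball hζ).1.le, (hball hζ).2.le⟩
    have hζn : ‖ζ‖ ≤ ‖ζ₀‖ + ε := by
      have h2 : ‖ζ - ζ₀‖ < ε := by rw [← dist_eq_norm]; exact Metric.mem_ball.1 hζ
      calc ‖ζ‖ = ‖ζ₀ + (ζ - ζ₀)‖ := by ring_nf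
        _ ≤ ‖ζ₀‖ + ‖ζ - ζ₀‖ := norm_add_le _ _
        _ ≤ ‖ζ₀‖ + ε := by linarith
    have hcosh : ‖Complex.cosh ζ‖ ≤ C :=
      (norm_cosh_le ζ).trans (Real.exp_le_exp.2 hζn)
    have hsinh : ‖Complex.sinh ζ‖ ≤ C :=
      (norm_sinh_le ζ).trans (Real.exp_le_exp.2 hζn)
    by_cases hgx : g x = 0
    · simp only [hgx, zero_mul, norm_zero]
      positivity
    · have hx : x.2 < -|x.1| := hsupp (Function.mem_support.2 hgx)
      rw [norm_mul, norm_mul]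
      have h1 : ‖Complex.exp (Eexp m ζ x)‖ ≤ 1 := by
        have h7 := norm_cexp_Eexp_le hm le_rfl
          (Real.sin_nonneg_of_nonneg_of_le_pi hζS.1 hζS.2) hx
        simpa using h7
      have h2 : ‖Complex.I * ((m : ℂ) *
          (Complex.sinh ζ * x.1 - Complex.cosh ζ * x.2))‖ ≤ 2 * m * C * ‖x‖ := by
        rw [norm_mul, Complex.norm_I, one_mul, norm_mul]
        have hx1 : ‖(x.1 : ℂ)‖ ≤ ‖x‖ := by
          rw [Complex.norm_real]; exact norm_fst_le x
        have hx2 : ‖(x.2 : ℂ)‖ ≤ ‖x‖ := by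
          rw [Complex.norm_real]; exact norm_snd_le x
        have hmn : ‖(m : ℂ)‖ = m := by
          rw [Complex.norm_real, Real.norm_eq_abs, abs_of_pos hm]
        rw [hmn]
        have h3 : ‖Complex.sinh ζ * (x.1 : ℂ) - Complex.cosh ζ * (x.2 : ℂ)‖
            ≤ C * ‖x‖ + C * ‖x‖ := by
          calc ‖Complex.sinh ζ * (x.1:ℂ) - Complex.cosh ζ * (x.2:ℂ)‖
              ≤ ‖Complex.sinh ζ * (x.1:ℂ)‖ + ‖Complex.cosh ζ * (x.2:ℂ)‖ :=
                norm_sub_le _ _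
            _ ≤ C * ‖x‖ + C * ‖x‖ := by
                rw [norm_mul, norm_mul]
                have e1 := mul_le_mul hsinh hx1 (norm_nonneg _) hC0.le
                have e2 := mul_le_mul hcosh hx2 (norm_nonneg _) hC0.le
                linarith
        calc m * ‖Complex.sinh ζ * (x.1:ℂ) - Complex.cosh ζ * (x.2:ℂ)‖
            ≤ m * (C * ‖x‖ + C * ‖x‖) := mul_le_mul_of_nonneg_left h3 hm.le
          _ = 2 * m * C * ‖x‖ := by ring
      calc ‖g x‖ * (‖Complex.exp (Eexp m ζ x)‖ *
            ‖Complex.I * ((m:ℂ) * (Complex.sinh ζ * x.1 - Complex.cosh ζ * x.2))‖)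
          ≤ ‖g x‖ * (1 * (2 * m * C * ‖x‖)) := by
            apply mul_le_mul_of_nonneg_left _ (norm_nonneg _)
            exact mul_le_mul h1 h2 (norm_nonneg _) zero_le_one
        _ = 2 * m * C * ‖x‖ * ‖g x‖ := by ring
  · have h9 := (g.integrable_pow_mul volume 1).const_mul (2 * m * C)
    apply h9.congr
    apply Filter.Eventually.of_forall
    intro x; simp [pow_one]; ring
  · apply Filter.Eventually.of_forall
    intro x ζ hζ
    exact hasDerivAt_f m g x ζ
/-- Analytic continuation of the one-particle wave functions of
test functions localized in the left wedge W_L = {x : x₁ < −|x₀|}: g⁺ extends to a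
function F, continuous on the closed strip 0 ≤ Im ζ ≤ π, holomorphic in its interior,
with boundary values F(θ) = g⁺(θ) and F(θ+iπ) = g⁻(θ), and F(ζ) → 0 as |Re ζ| → ∞,
uniformly for Im ζ in compact subsets of (0, π). -/
theorem statement17 (m : ℝ) (hm : 0 < m) (g : SchwartzMap (ℝ × ℝ) ℂ)
    (hsupp : Function.support (⇑g) ⊆ {x : ℝ × ℝ | x.2 < -|x.1|}) :
    ∃ F : ℂ → ℂ,
      ContinuousOn F {ζ : ℂ | 0 ≤ ζ.im ∧ ζ.im ≤ Real.pi} ∧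
      DifferentiableOn ℂ F {ζ : ℂ | 0 < ζ.im ∧ ζ.im < Real.pi} ∧
      (∀ θ : ℝ, F (θ : ℂ) = waveFn m (⇑g) θ) ∧
      (∀ θ : ℝ, F ((θ : ℂ) + Real.pi * Complex.I) = waveFn m (fun x => g (-x)) θ) ∧
      (∀ a b : ℝ, 0 < a → a ≤ b → b < Real.pi →
        ∀ ε : ℝ, 0 < ε → ∃ R : ℝ, ∀ ζ : ℂ,
          a ≤ ζ.im → ζ.im ≤ b → R ≤ |ζ.re| → ‖F ζ‖ < ε) := by
  refine ⟨fun ζ => (1 / (2 * (Real.pi : ℂ))) *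
      ∫ x : ℝ × ℝ, g x * Complex.exp (Eexp m ζ x),
    contOnF m hm g hsupp, diffOnF m hm g hsupp,
    fun θ => bdry0 m g θ, fun θ => bdrypi m g θ,
    fun a b ha hab hb ε hε => decayF m hm g hsupp a b ha hab hb ε hε⟩

end
end

section
/- The two-particle S-matrix acts on scattering states by the scattering function: let f, g ∈ L²(ℝ, ℂ) with essential supports satisfying supp f − supp g ⊆ [0, ∞) (i.e. θ ≥ θ′ whenever θ ∈ supp f and θ′ ∈ supp g). Then for almost every (θ₁, θ₂) ∈ ℝ²: S₂(|θ₁ − θ₂|)·(g(θ₁)f(θ₂) + S₂(θ₂ − θ₁)·g(θ₂)f(θ₁)) = f(θ₁)g(θ₂) + S₂(θ₂ − θ₁)·f(θ₂)g(θ₁); equivalently, the multiplication operator S by the function (θ₁,θ₂) ↦ S₂(|θ₁−θ₂|) on L²(ℝ²) maps the outgoing two-particle state √2·P₂(g ⊗ f) to the incoming two-particle state √2·P₂(f ⊗ g). -/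
open MeasureTheory Complex

noncomputable section

/-- The two-particle S-matrix acts on scattering states by the
scattering function: if supp f − supp g ⊆ [0,∞), then a.e.
S₂(|θ₁−θ₂|)·(g(θ₁)f(θ₂) + S₂(θ₂−θ₁)·g(θ₂)f(θ₁))
  = f(θ₁)g(θ₂) + S₂(θ₂−θ₁)·f(θ₂)g(θ₁),
i.e. the multiplication operator by S₂(|θ₁−θ₂|) maps the outgoing two-particle state
√2·P₂(g ⊗ f) to the incoming two-particle state √2·P₂(f ⊗ g). -/
theorem statement19 (S₂ : ℝ → ℂ)
    (hS₂meas : Measurable S₂)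
    (hS₂abs : ∀ θ : ℝ, ‖S₂ θ‖ = 1)
    (hS₂sym : ∀ θ : ℝ, S₂ (-θ) = starRingEnd ℂ (S₂ θ))
    (f g : ℝ → ℂ)
    (hf : MemLp f 2 (volume : Measure ℝ))
    (hg : MemLp g 2 (volume : Measure ℝ))
    (hsupp : ∀ θ θ' : ℝ, f θ ≠ 0 → g θ' ≠ 0 → θ' ≤ θ) :
    ∀ᵐ p ∂(volume : Measure (ℝ × ℝ)),
      S₂ |p.1 - p.2| * (g p.1 * f p.2 + S₂ (p.2 - p.1) * (g p.2 * f p.1))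
        = f p.1 * g p.2 + S₂ (p.2 - p.1) * (f p.2 * g p.1) := by
  have hunit : ∀ θ : ℝ, S₂ (-θ) * S₂ θ = 1 := by
    intro θ
    rw [hS₂sym θ]
    rw [mul_comm, Complex.mul_conj, Complex.normSq_eq_norm_sq, hS₂abs]
    norm_num
  refine Filter.Eventually.of_forall ?_
  rintro ⟨θ₁, θ₂⟩
  simp only
  rcases lt_trichotomy θ₁ θ₂ with h | h | h
  · -- θ₁ < θ₂: g θ₂ * f θ₁ = 0 and f θ₁ * g θ₂ = 0
    have h1 : f θ₁ * g θ₂ = 0 := by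
      by_contra hc
      rcases mul_ne_zero_iff.mp hc with ⟨hf1, hg2⟩
      exact absurd (hsupp θ₁ θ₂ hf1 hg2) (not_le.mpr h)
    have h2 : g θ₂ * f θ₁ = 0 := by rw [mul_comm]; exact h1
    have habs : |θ₁ - θ₂| = θ₂ - θ₁ := by
      rw [abs_of_nonpos (by linarith)]; ring
    rw [habs, h1, h2]
    ring
  · subst h
    have h0 : S₂ 0 * S₂ 0 = 1 := by simpa using hunit 0
    have habs : |θ₁ - θ₁| = (0 : ℝ) := by simp
    rw [sub_self, abs_zero]
    calc S₂ 0 * (g θ₁ * f θ₁ + S₂ 0 * (g θ₁ * f θ₁))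
        = (S₂ 0 * S₂ 0) * (g θ₁ * f θ₁) + S₂ 0 * (g θ₁ * f θ₁) := by ring
      _ = f θ₁ * g θ₁ + S₂ 0 * (f θ₁ * g θ₁) := by rw [h0]; ring
  · -- θ₂ < θ₁: g θ₁ * f θ₂ = 0 and f θ₂ * g θ₁ = 0
    have h1 : f θ₂ * g θ₁ = 0 := by
      by_contra hc
      rcases mul_ne_zero_iff.mp hc with ⟨hf2, hg1⟩
      exact absurd (hsupp θ₂ θ₁ hf2 hg1) (not_le.mpr h)
    have h2 : g θ₁ * f θ₂ = 0 := by rw [mul_comm]; exact h1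
    have habs : |θ₁ - θ₂| = -(θ₂ - θ₁) := by
      rw [_root_.abs_of_nonneg (by linarith)]; ring
    have hu : S₂ (-(θ₂ - θ₁)) * S₂ (θ₂ - θ₁) = 1 := hunit _
    rw [habs, h1, h2]
    calc S₂ (-(θ₂ - θ₁)) * (0 + S₂ (θ₂ - θ₁) * (g θ₂ * f θ₁))
        = (S₂ (-(θ₂ - θ₁)) * S₂ (θ₂ - θ₁)) * (g θ₂ * f θ₁) := by ring
      _ = f θ₁ * g θ₂ + S₂ (θ₂ - θ₁) * 0 := by rw [hu]; ring

end
end
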